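/- arXiv:1303.4145 — 2 statements merged into one kernel-verified Lean document; each statement's English description precedes it below -/
import Mathlib

section
/- Let N ≥ 2, θ, l ∈ ℝ, p > 1 and R > 0. A solution v of (E) on B_R \ {0} is stable if and only if the function z defined by z(y) = v(x), y = x/|x|², is a stable solution of −div(|y|^{θ̃} ∇z) = |y|^{l̃} |z|^{p−1} z on ℝ^N \ closure(B_{1/R}), where θ̃ = 4 − 2N − θ and l̃ = −2N − l. -/
open MeasureTheory Set Filter Metric

noncomputable section

abbrev Euc (N : ℕ) : Type := EuclideanSpace ℝ (Fin N)

def MemH1w {N : ℕ} (θ : ℝ) (Ω : Set (Euc N)) (φ : Euc N → ℝ) : Prop :=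
  IntegrableOn (fun x => ‖x‖ ^ θ * (φ x) ^ 2) Ω volume ∧
  IntegrableOn (fun x => ‖x‖ ^ θ * ‖gradient φ x‖ ^ 2) Ω volume

def MemH1wLoc {N : ℕ} (θ : ℝ) (Ω : Set (Euc N)) (φ : Euc N → ℝ) : Prop :=
  ∀ K : Set (Euc N), K ⊆ Ω → IsCompact K → MemH1w θ K φ

def MemLinftyLoc {N : ℕ} (Ω : Set (Euc N)) (φ : Euc N → ℝ) : Prop :=
  ∀ K : Set (Euc N), K ⊆ Ω → IsCompact K → ∃ C : ℝ, ∀ x ∈ K, |φ x| ≤ C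

def MemH1wc {N : ℕ} (θ : ℝ) (Ω : Set (Euc N)) (φ : Euc N → ℝ) : Prop :=
  MemH1w θ Ω φ ∧ HasCompactSupport φ ∧ tsupport φ ⊆ Ω

def IsSolutionE {N : ℕ} (θ l p : ℝ) (Ω : Set (Euc N)) (v : Euc N → ℝ) : Prop :=
  MemH1wLoc θ Ω v ∧ MemLinftyLoc Ω v ∧
  ∀ φ : Euc N → ℝ, MemH1wc θ Ω φ → MemLinftyLoc Ω φ →
    ∫ x in Ω, (‖x‖ ^ θ * (inner ℝ (gradient v x) (gradient φ x) : ℝ)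
      - ‖x‖ ^ l * |v x| ^ (p - 1) * v x * φ x) = 0

def Qform {N : ℕ} (θ l p : ℝ) (Ω : Set (Euc N)) (v ψ : Euc N → ℝ) : ℝ :=
  ∫ x in Ω, (‖x‖ ^ θ * ‖gradient ψ x‖ ^ 2 - p * ‖x‖ ^ l * |v x| ^ (p - 1) * (ψ x) ^ 2)

def IsStableE {N : ℕ} (θ l p : ℝ) (Ω : Set (Euc N)) (v : Euc N → ℝ) : Prop :=
  ∀ ψ : Euc N → ℝ, MemH1wc θ Ω ψ → MemLinftyLoc Ω ψ → 0 ≤ Qform θ l p Ω v ψ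

def HasFiniteMorseIndex {N : ℕ} (θ l p : ℝ) (Ω : Set (Euc N)) (v : Euc N → ℝ) : Prop :=
  ∃ k : ℕ, ∀ X : Submodule ℝ (Euc N → ℝ),
    (∀ ψ ∈ X, MemH1wc θ Ω ψ ∧ MemLinftyLoc Ω ψ ∧ (ψ ≠ 0 → Qform θ l p Ω v ψ < 0)) →
    FiniteDimensional ℝ ↥X ∧ Module.finrank ℝ ↥X ≤ k

def Pplus (N' τ : ℝ) : ℝ :=
  ((N' - 2) ^ 2 - 2 * (2 + τ) * (N' + τ)
      + 2 * (2 + τ) * Real.sqrt ((2 + τ) * (2 * N' + τ - 2)))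
    / ((N' - 2) * (N' - 4 * τ - 10))

def Pminus (N' τ : ℝ) : ℝ :=
  if N' = 4 * τ + 10 then 4 / 3 else
    ((N' - 2) ^ 2 - 2 * (2 + τ) * (N' + τ)
        - 2 * (2 + τ) * Real.sqrt ((2 + τ) * (2 * N' + τ - 2)))
      / ((N' - 2) * (N' - 4 * τ - 10))

def pc (N' τ : ℝ) : EReal :=
  if N' ≤ 10 + 4 * τ then ⊤ else ((Pplus N' τ : ℝ) : EReal)

def lap {N : ℕ} (f : Euc N → ℝ) (x : Euc N) : ℝ :=
  ∑ i : Fin N,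
    fderiv ℝ (fun y => fderiv ℝ f y (EuclideanSpace.single i (1 : ℝ))) x
      (EuclideanSpace.single i (1 : ℝ))

def diverg {N : ℕ} (F : Euc N → Euc N) (x : Euc N) : ℝ :=
  ∑ i : Fin N, fderiv ℝ (fun y => F y i) x (EuclideanSpace.single i (1 : ℝ))

def invPt {N : ℕ} (y : Euc N) : Euc N := (‖y‖ ^ 2)⁻¹ • y


variable {N : ℕ}

lemma invPt_zero : invPt (0 : Euc N) = 0 := by simp [invPt]

lemma norm_invPt (y : Euc N) : ‖invPt y‖ = ‖y‖⁻¹ := by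
  rcases eq_or_ne y 0 with rfl | hy
  · simp [invPt]
  · have h : (0:ℝ) < ‖y‖ := norm_pos_iff.2 hy
    rw [invPt, norm_smul]
    rw [Real.norm_eq_abs, abs_inv, abs_of_nonneg (by positivity)]
    field_simp

lemma invPt_invPt (y : Euc N) : invPt (invPt y) = y := by
  rcases eq_or_ne y 0 with rfl | hy
  · simp [invPt]
  · have h : (0:ℝ) < ‖y‖ := norm_pos_iff.2 hy
    rw [invPt, norm_invPt, invPt, smul_smul]
    rw [show (‖y‖⁻¹ ^ 2)⁻¹ * (‖y‖ ^ 2)⁻¹ = 1 by field_simp]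
    simp

lemma invPt_ne_zero {y : Euc N} (hy : y ≠ 0) : invPt y ≠ 0 := by
  intro h
  have := norm_invPt y
  rw [h, norm_zero] at this
  exact hy (by simpa using (inv_eq_zero.1 this.symm))

def Bmap (y : Euc N) : Euc N →L[ℝ] Euc N :=
  ContinuousLinearMap.id ℝ (Euc N) - (2 * (‖y‖ ^ 2)⁻¹) • ((innerSL ℝ y).smulRight y)

lemma Bmap_apply (y h : Euc N) :
    Bmap y h = h - (2 * (‖y‖ ^ 2)⁻¹ * (inner ℝ y h : ℝ)) • y := by
  simp [Bmap, ContinuousLinearMap.smul_apply, smul_smul]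

lemma inner_Bmap_right (y h k : Euc N) :
    (inner ℝ k (Bmap y h) : ℝ) = inner ℝ k h - 2 * (‖y‖ ^ 2)⁻¹ * (inner ℝ y h : ℝ) * (inner ℝ k y : ℝ) := by
  rw [Bmap_apply, inner_sub_right, real_inner_smul_right]

lemma Bmap_symm (y h k : Euc N) : (inner ℝ (Bmap y h) k : ℝ) = (inner ℝ h (Bmap y k) : ℝ) := by
  rw [real_inner_comm, inner_Bmap_right, inner_Bmap_right]
  rw [real_inner_comm k h, real_inner_comm k y, real_inner_comm h y]
  ring

lemma inner_self_Bmap {y : Euc N} (hy : y ≠ 0) (h : Euc N) :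
    (inner ℝ y (Bmap y h) : ℝ) = -(inner ℝ y h : ℝ) := by
  have hn : (0:ℝ) < ‖y‖ := norm_pos_iff.2 hy
  rw [inner_Bmap_right, real_inner_self_eq_norm_sq]
  field_simp
  ring

lemma Bmap_Bmap {y : Euc N} (hy : y ≠ 0) (h : Euc N) : Bmap y (Bmap y h) = h := by
  rw [Bmap_apply y (Bmap y h), inner_self_Bmap hy, Bmap_apply]
  module

lemma norm_Bmap {y : Euc N} (hy : y ≠ 0) (h : Euc N) : ‖Bmap y h‖ = ‖h‖ := by
  have hn : (0:ℝ) < ‖y‖ := norm_pos_iff.2 hy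
  have h2 : ‖Bmap y h‖ ^ 2 = ‖h‖ ^ 2 := by
    rw [← real_inner_self_eq_norm_sq, ← real_inner_self_eq_norm_sq, Bmap_apply,
      inner_sub_left, inner_sub_right, inner_sub_right, real_inner_smul_left,
      real_inner_smul_left, real_inner_smul_right, real_inner_smul_right,
      real_inner_self_eq_norm_sq, real_inner_self_eq_norm_sq y]
    rw [real_inner_comm y h]
    generalize (inner ℝ h y : ℝ) = a
    have hne : (‖y‖ : ℝ) ^ 2 ≠ 0 := by positivity
    field_simp
    ring
  rw [← Real.sqrt_sq (norm_nonneg (Bmap y h)), h2, Real.sqrt_sq (norm_nonneg h)]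


lemma Bmap_det_abs {y : Euc N} (hy : y ≠ 0) : |(Bmap y).det| = 1 := by
  have hcomp : (Bmap y).toLinearMap * (Bmap y).toLinearMap = LinearMap.id := by
    apply LinearMap.ext
    intro h
    simpa using Bmap_Bmap hy h
  have hdet : LinearMap.det ((Bmap y).toLinearMap) * LinearMap.det ((Bmap y).toLinearMap) = 1 := by
    rw [← map_mul, hcomp, LinearMap.det_id]
  rcases mul_self_eq_one_iff.1 hdet with h | h <;>
    simp [ContinuousLinearMap.det, h]

def Amap (y : Euc N) : Euc N →L[ℝ] Euc N := (‖y‖ ^ 2)⁻¹ • Bmap y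

lemma Amap_apply (y h : Euc N) : Amap y h = (‖y‖ ^ 2)⁻¹ • Bmap y h := rfl

lemma norm_Amap {y : Euc N} (hy : y ≠ 0) (h : Euc N) : ‖Amap y h‖ = (‖y‖ ^ 2)⁻¹ * ‖h‖ := by
  rw [Amap_apply, norm_smul, norm_Bmap hy, Real.norm_eq_abs, abs_of_nonneg (by positivity)]

lemma Amap_symm (y h k : Euc N) : (inner ℝ (Amap y h) k : ℝ) = (inner ℝ h (Amap y k) : ℝ) := by
  rw [Amap_apply, Amap_apply, real_inner_smul_left, real_inner_smul_right, Bmap_symm]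

lemma Amap_det_abs {y : Euc N} (hy : y ≠ 0) : |(Amap y).det| = ‖y‖ ^ ((-2 : ℝ) * N) := by
  have hn : (0:ℝ) < ‖y‖ := norm_pos_iff.2 hy
  have h1 : (Amap y).det = (‖y‖ ^ 2)⁻¹ ^ (Module.finrank ℝ (Euc N)) * (Bmap y).det := by
    rw [ContinuousLinearMap.det]
    have : (Amap y).toLinearMap = (‖y‖ ^ 2)⁻¹ • (Bmap y).toLinearMap := rfl
    rw [this, LinearMap.det_smul]
  rw [h1, abs_mul, Bmap_det_abs hy, mul_one, finrank_euclideanSpace_fin]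
  rw [abs_of_nonneg (by positivity)]
  rw [show ((-2 : ℝ) * N) = (2 : ℝ) * N * (-1) by ring]
  rw [Real.rpow_mul (le_of_lt hn), Real.rpow_neg_one]
  rw [Real.rpow_mul (le_of_lt hn), ← inv_pow]
  norm_num

lemma hasFDerivAt_invPt {y : Euc N} (hy : y ≠ 0) : HasFDerivAt invPt (Amap y) y := by
  have hn : (0:ℝ) < ‖y‖ := norm_pos_iff.2 hy
  have h1 : HasFDerivAt (fun w : Euc N => ‖w‖ ^ 2) (2 • (innerSL ℝ y)) y :=
    (hasStrictFDerivAt_norm_sq y).hasFDerivAt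
  have h2 : HasDerivAt (fun t : ℝ => t⁻¹) (-((‖y‖ ^ 2) ^ 2)⁻¹) (‖y‖ ^ 2) :=
    hasDerivAt_inv (by positivity)
  have h3 : HasFDerivAt (fun w : Euc N => (‖w‖ ^ 2)⁻¹)
      ((-((‖y‖ ^ 2) ^ 2)⁻¹) • (2 • (innerSL ℝ y))) y := h2.comp_hasFDerivAt y h1
  have h4 := h3.smul (hasFDerivAt_id y)
  refine h4.congr_fderiv (Eq.symm ?_)
  refine ContinuousLinearMap.ext fun h => ?_
  simp only [Amap_apply, Bmap_apply, ContinuousLinearMap.add_apply,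
    ContinuousLinearMap.smul_apply, ContinuousLinearMap.coe_id', id_eq,
    ContinuousLinearMap.smulRight_apply, ContinuousLinearMap.coe_smul',
    Pi.smul_apply, innerSL_apply_apply, smul_smul, smul_sub]
  rw [sub_eq_add_neg, ← neg_smul]
  congr 1
  simp only [smul_eq_mul]
  have hne : (‖y‖ : ℝ) ^ 2 ≠ 0 := by positivity
  field_simp
  congr 1
  ring

lemma gradient_zero_of_not_diff {ψ : Euc N → ℝ} {x : Euc N} (h : ¬ DifferentiableAt ℝ ψ x) :
    gradient ψ x = 0 := by
  rw [gradient, fderiv_zero_of_not_differentiableAt h, map_zero]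

lemma diffAt_comp_invPt_iff {ψ : Euc N → ℝ} {y : Euc N} (hy : y ≠ 0) :
    DifferentiableAt ℝ (fun w => ψ (invPt w)) y ↔ DifferentiableAt ℝ ψ (invPt y) := by
  constructor
  · intro hd
    have h2 : DifferentiableAt ℝ invPt (invPt y) :=
      (hasFDerivAt_invPt (invPt_ne_zero hy)).differentiableAt
    rw [← invPt_invPt y] at hd
    have := hd.comp (invPt y) h2
    simpa only [Function.comp_def, invPt_invPt] using this
  · intro hd
    exact (hd.comp y (hasFDerivAt_invPt hy).differentiableAt :)

lemma gradient_comp_invPt {ψ : Euc N → ℝ} {y : Euc N} (hy : y ≠ 0)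
    (hd : DifferentiableAt ℝ ψ (invPt y)) :
    gradient (fun w => ψ (invPt w)) y = Amap y (gradient ψ (invPt y)) := by
  set x := invPt y with hx
  have hg : HasGradientAt ψ (gradient ψ x) x := hd.hasGradientAt
  have hf : HasFDerivAt ψ (InnerProductSpace.toDual ℝ (Euc N) (gradient ψ x)) x :=
    hasGradientAt_iff_hasFDerivAt.1 hg
  have hcomp : HasFDerivAt (fun w => ψ (invPt w))
      ((InnerProductSpace.toDual ℝ (Euc N) (gradient ψ x)).comp (Amap y)) y :=
    HasFDerivAt.comp y hf (hasFDerivAt_invPt hy)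
  have heq : (InnerProductSpace.toDual ℝ (Euc N) (gradient ψ x)).comp (Amap y)
      = InnerProductSpace.toDual ℝ (Euc N) (Amap y (gradient ψ x)) := by
    refine ContinuousLinearMap.ext fun h => ?_
    simp only [ContinuousLinearMap.comp_apply, InnerProductSpace.toDual_apply_apply]
    rw [← Amap_symm, real_inner_comm]
  rw [heq] at hcomp
  exact (hasGradientAt_iff_hasFDerivAt.2 hcomp).gradient

lemma norm_gradient_comp_invPt (ψ : Euc N → ℝ) {y : Euc N} (hy : y ≠ 0) :
    ‖gradient (fun w => ψ (invPt w)) y‖ = (‖y‖ ^ 2)⁻¹ * ‖gradient ψ (invPt y)‖ := by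
  by_cases hd : DifferentiableAt ℝ ψ (invPt y)
  · rw [gradient_comp_invPt hy hd, norm_Amap hy]
  · rw [gradient_zero_of_not_diff hd,
      gradient_zero_of_not_diff ((diffAt_comp_invPt_iff hy).not.2 hd)]
    simp

lemma invPt_injective : Function.Injective (invPt (N := N)) :=
  Function.LeftInverse.injective invPt_invPt

lemma image_invPt_eq {S T : Set (Euc N)} (hST : ∀ y ∈ S, invPt y ∈ T)
    (hTS : ∀ x ∈ T, invPt x ∈ S) : invPt '' S = T := by
  apply Subset.antisymm
  · rintro x ⟨y, hy, rfl⟩; exact hST y hy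
  · intro x hx
    exact ⟨invPt x, hTS x hx, invPt_invPt x⟩

lemma hasFDerivWithinAt_invPt {Ω : Set (Euc N)} (hΩ0 : ∀ y ∈ Ω, y ≠ 0) :
    ∀ y ∈ Ω, HasFDerivWithinAt invPt (Amap y) Ω y :=
  fun y hy => (hasFDerivAt_invPt (hΩ0 y hy)).hasFDerivWithinAt

lemma integral_invPt_image {Ω : Set (Euc N)} (hΩ : MeasurableSet Ω)
    (hΩ0 : ∀ y ∈ Ω, y ≠ 0) (g : Euc N → ℝ) :
    ∫ x in invPt '' Ω, g x = ∫ y in Ω, ‖y‖ ^ ((-2 : ℝ) * N) * g (invPt y) := by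
  rw [integral_image_eq_integral_abs_det_fderiv_smul volume hΩ
    (hasFDerivWithinAt_invPt hΩ0) (invPt_injective.injOn) g]
  apply setIntegral_congr_fun hΩ
  intro y hy
  dsimp only
  rw [Amap_det_abs (hΩ0 y hy), smul_eq_mul]

lemma integrableOn_invPt_image_iff {Ω : Set (Euc N)} (hΩ : MeasurableSet Ω)
    (hΩ0 : ∀ y ∈ Ω, y ≠ 0) (g : Euc N → ℝ) :
    IntegrableOn g (invPt '' Ω) volume ↔
      IntegrableOn (fun y => ‖y‖ ^ ((-2 : ℝ) * N) * g (invPt y)) Ω volume := by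
  rw [integrableOn_image_iff_integrableOn_abs_det_fderiv_smul volume hΩ
    (hasFDerivWithinAt_invPt hΩ0) (invPt_injective.injOn) g]
  apply integrableOn_congr_fun _ hΩ
  intro y hy
  dsimp only
  rw [Amap_det_abs (hΩ0 y hy), smul_eq_mul]

lemma grad_piece {θ θt : ℝ} (hθt : θt = 4 - 2 * (N : ℝ) - θ) (ψ : Euc N → ℝ)
    {y : Euc N} (hy : y ≠ 0) :
    ‖y‖ ^ ((-2 : ℝ) * N) * (‖invPt y‖ ^ θ * ‖gradient (fun w => ψ (invPt w)) (invPt y)‖ ^ 2)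
      = ‖y‖ ^ θt * ‖gradient ψ y‖ ^ 2 := by
  have hs : (0:ℝ) < ‖y‖ := norm_pos_iff.2 hy
  rw [norm_gradient_comp_invPt ψ (invPt_ne_zero hy), invPt_invPt, norm_invPt]
  rw [Real.inv_rpow hs.le, ← Real.rpow_neg hs.le]
  rw [inv_pow, inv_inv, mul_pow, ← pow_mul]
  have e1 : ‖y‖ ^ θt = ‖y‖ ^ ((-2 : ℝ) * N) * ‖y‖ ^ (-θ) * ‖y‖ ^ (2 * 2 : ℕ) := by
    rw [← Real.rpow_natCast ‖y‖ (2*2), ← Real.rpow_add hs, ← Real.rpow_add hs, hθt]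
    congr 1
    push_cast
    ring
  rw [e1]; ring

lemma l2_piece {l lt : ℝ} (hlt : lt = -2 * (N : ℝ) - l) (q : ℝ) {y : Euc N} (hy : y ≠ 0) :
    ‖y‖ ^ ((-2 : ℝ) * N) * (‖invPt y‖ ^ l * q) = ‖y‖ ^ lt * q := by
  have hs : (0:ℝ) < ‖y‖ := norm_pos_iff.2 hy
  rw [norm_invPt, Real.inv_rpow hs.le, ← Real.rpow_neg hs.le]
  have e1 : ‖y‖ ^ lt = ‖y‖ ^ ((-2 : ℝ) * N) * ‖y‖ ^ (-l) := by
    rw [← Real.rpow_add hs, hlt]; ring_nf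
  rw [e1]; ring

lemma integrand_transfer {θ l p θt lt : ℝ} (hθt : θt = 4 - 2 * (N : ℝ) - θ)
    (hlt : lt = -2 * (N : ℝ) - l) (v z ψ : Euc N → ℝ) (hz : ∀ w, z w = v (invPt w))
    {y : Euc N} (hy : y ≠ 0) :
    ‖y‖ ^ ((-2 : ℝ) * N) *
      (‖invPt y‖ ^ θ * ‖gradient (fun w => ψ (invPt w)) (invPt y)‖ ^ 2
        - p * ‖invPt y‖ ^ l * |v (invPt y)| ^ (p - 1) * (ψ (invPt (invPt y))) ^ 2)
      = ‖y‖ ^ θt * ‖gradient ψ y‖ ^ 2 - p * ‖y‖ ^ lt * |z y| ^ (p - 1) * (ψ y) ^ 2 := by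
  rw [mul_sub, grad_piece hθt ψ hy, invPt_invPt, hz y]
  rw [show ∀ a b c d : ℝ, a * (p * b * c * d) = a * (b * (p * c * d)) from by intros; ring]
  rw [l2_piece hlt (p * |v (invPt y)| ^ (p-1) * (ψ y)^2) hy]
  ring

lemma Qform_invPt {Ω : Set (Euc N)} (hΩ : MeasurableSet Ω) (hΩ0 : ∀ y ∈ Ω, y ≠ 0)
    {θ l p θt lt : ℝ} (hθt : θt = 4 - 2 * (N : ℝ) - θ) (hlt : lt = -2 * (N : ℝ) - l)
    (v z ψ : Euc N → ℝ) (hz : ∀ w, z w = v (invPt w)) :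
    Qform θ l p (invPt '' Ω) v (fun w => ψ (invPt w)) = Qform θt lt p Ω z ψ := by
  rw [Qform, Qform, integral_invPt_image hΩ hΩ0]
  apply setIntegral_congr_fun hΩ
  intro y hy
  dsimp only
  exact integrand_transfer hθt hlt v z ψ hz (hΩ0 y hy)



lemma invPt_continuousOn : ContinuousOn (invPt (N := N)) {0}ᶜ := fun y hy =>
  ((hasFDerivAt_invPt (by simpa using hy)).differentiableAt.continuousAt).continuousWithinAt

lemma isCompact_invPt_image {K : Set (Euc N)} (hK : IsCompact K) (h0 : (0 : Euc N) ∉ K) :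
    IsCompact (invPt '' K) :=
  hK.image_of_continuousOn (invPt_continuousOn.mono (fun w hw h0' => h0 (by simpa using h0' ▸ hw)))

lemma exists_pos_le_norm {K : Set (Euc N)} (hK : IsCompact K) (h0 : (0 : Euc N) ∉ K) :
    ∃ δ : ℝ, 0 < δ ∧ ∀ w ∈ K, δ ≤ ‖w‖ := by
  rcases K.eq_empty_or_nonempty with rfl | hne
  · exact ⟨1, one_pos, by simp⟩
  · obtain ⟨w0, hw0, hmin⟩ := hK.exists_isMinOn hne continuous_norm.continuousOn
    refine ⟨‖w0‖, norm_pos_iff.2 (fun h => h0 (h ▸ hw0)), fun w hw => isMinOn_iff.1 hmin w hw⟩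

lemma tsupport_comp_invPt_subset {ψ : Euc N → ℝ} (hK : IsCompact (tsupport ψ))
    (h0 : (0 : Euc N) ∉ tsupport ψ) :
    tsupport (fun w => ψ (invPt w)) ⊆ invPt '' tsupport ψ := by
  have hcl : IsClosed (invPt '' tsupport ψ) := (isCompact_invPt_image hK h0).isClosed
  apply closure_minimal _ hcl
  intro w hw
  exact ⟨invPt w, subset_tsupport _ (by simpa using hw), invPt_invPt w⟩

lemma memLinftyLoc_comp_invPt {Ω : Set (Euc N)} (hΩ0 : ∀ y ∈ Ω, y ≠ 0) {ψ : Euc N → ℝ}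
    (h : MemLinftyLoc Ω ψ) : MemLinftyLoc (invPt '' Ω) (fun w => ψ (invPt w)) := by
  intro K hK hKc
  have hK0 : (0 : Euc N) ∉ K := by
    intro h0
    obtain ⟨y, hy, hy0⟩ := hK h0
    exact invPt_ne_zero (hΩ0 y hy) hy0
  have hsub : invPt '' K ⊆ Ω := by
    rintro _ ⟨x, hx, rfl⟩
    obtain ⟨y, hy, rfl⟩ := hK hx
    rwa [invPt_invPt]
  obtain ⟨C, hC⟩ := h (invPt '' K) hsub (isCompact_invPt_image hKc hK0)
  exact ⟨C, fun x hx => hC (invPt x) ⟨x, hx, rfl⟩⟩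

lemma integrableOn_weight_change {Ω : Set (Euc N)} (hΩ : MeasurableSet Ω)
    (hΩ0 : ∀ y ∈ Ω, y ≠ 0) {ψ : Euc N → ℝ} {a b δ M : ℝ} (hδ : 0 < δ)
    (hsupp : ∀ y : Euc N, ψ y ≠ 0 → δ ≤ ‖y‖ ∧ ‖y‖ ≤ M)
    (h : IntegrableOn (fun y => ‖y‖ ^ a * (ψ y) ^ 2) Ω volume) :
    IntegrableOn (fun y => ‖y‖ ^ b * (ψ y) ^ 2) Ω volume := by
  set C : ℝ := max (δ ^ (b - a)) (M ^ (b - a)) with hC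
  -- a.e. measurability
  have hmeas0 : AEStronglyMeasurable (fun y : Euc N => (ψ y) ^ 2) (volume.restrict Ω) := by
    have h1 : AEStronglyMeasurable (fun y : Euc N => ‖y‖ ^ (-a) * (‖y‖ ^ a * (ψ y) ^ 2))
        (volume.restrict Ω) :=
      ((measurable_norm.pow measurable_const).aestronglyMeasurable).mul h.aestronglyMeasurable
    apply h1.congr
    filter_upwards [ae_restrict_mem hΩ] with y hy
    have hs : (0:ℝ) < ‖y‖ := norm_pos_iff.2 (hΩ0 y hy)
    rw [← mul_assoc, ← Real.rpow_add hs]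
    simp
  have hmeas : AEStronglyMeasurable (fun y : Euc N => ‖y‖ ^ b * (ψ y) ^ 2)
      (volume.restrict Ω) :=
    ((measurable_norm.pow measurable_const).aestronglyMeasurable).mul hmeas0
  apply Integrable.mono' (h.const_mul C) hmeas
  filter_upwards [ae_restrict_mem hΩ] with y hy
  have hs : (0:ℝ) < ‖y‖ := norm_pos_iff.2 (hΩ0 y hy)
  rcases eq_or_ne (ψ y) 0 with hψ | hψ
  · simp [hψ]
  · obtain ⟨h1, h2⟩ := hsupp y hψ
    have hfact : ‖y‖ ^ b = ‖y‖ ^ (b - a) * ‖y‖ ^ a := by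
      rw [← Real.rpow_add hs]; ring_nf
    have hba : ‖y‖ ^ (b - a) ≤ C := by
      rcases le_or_gt 0 (b - a) with hsgn | hsgn
      · exact le_max_of_le_right (Real.rpow_le_rpow hs.le h2 hsgn)
      · exact le_max_of_le_left (Real.rpow_le_rpow_of_nonpos hδ h1 hsgn.le)
    have hnn : (0:ℝ) ≤ ‖y‖ ^ a * (ψ y) ^ 2 := by positivity
    rw [Real.norm_eq_abs, abs_of_nonneg (by positivity), hfact, mul_assoc]
    exact mul_le_mul_of_nonneg_right hba hnn |>.trans_eq rfl

lemma memH1w_comp_invPt {Ω : Set (Euc N)} (hΩ : MeasurableSet Ω) (hΩ0 : ∀ y ∈ Ω, y ≠ 0)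
    {θ θt : ℝ} (hθt : θt = 4 - 2 * (N : ℝ) - θ) {ψ : Euc N → ℝ}
    (hcs : IsCompact (tsupport ψ)) (h0supp : (0 : Euc N) ∉ tsupport ψ)
    (h : MemH1w θt Ω ψ) : MemH1w θ (invPt '' Ω) (fun w => ψ (invPt w)) := by
  obtain ⟨hL2, hG⟩ := h
  constructor
  · rw [integrableOn_invPt_image_iff hΩ hΩ0]
    have key : EqOn
        (fun y : Euc N => ‖y‖ ^ ((-2:ℝ) * N) * (‖invPt y‖ ^ θ * (ψ (invPt (invPt y))) ^ 2))
        (fun y : Euc N => ‖y‖ ^ (-2 * (N:ℝ) - θ) * (ψ y) ^ 2) Ω := by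
      intro y hy
      dsimp only
      rw [invPt_invPt, l2_piece (lt := -2 * (N:ℝ) - θ) rfl ((ψ y) ^ 2) (hΩ0 y hy)]
    obtain ⟨δ, hδ, hδle⟩ := exists_pos_le_norm hcs h0supp
    obtain ⟨M, hM⟩ := isBounded_iff_forall_norm_le.1 hcs.isBounded
    have hb : IntegrableOn (fun y : Euc N => ‖y‖ ^ (-2 * (N:ℝ) - θ) * (ψ y) ^ 2) Ω volume := by
      apply integrableOn_weight_change hΩ hΩ0 hδ
        (fun y hy => ⟨hδle y (subset_tsupport ψ hy), hM y (subset_tsupport ψ hy)⟩) hL2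
    exact IntegrableOn.congr_fun hb key.symm hΩ
  · rw [integrableOn_invPt_image_iff hΩ hΩ0]
    have key : EqOn
        (fun y : Euc N => ‖y‖ ^ ((-2:ℝ) * N) *
          (‖invPt y‖ ^ θ * ‖gradient (fun w => ψ (invPt w)) (invPt y)‖ ^ 2))
        (fun y : Euc N => ‖y‖ ^ θt * ‖gradient ψ y‖ ^ 2) Ω := by
      intro y hy
      exact grad_piece hθt ψ (hΩ0 y hy)
    exact IntegrableOn.congr_fun hG key.symm hΩ

lemma memH1wc_comp_invPt {Ω : Set (Euc N)} (hΩ : MeasurableSet Ω) (hΩ0 : ∀ y ∈ Ω, y ≠ 0)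
    {θ θt : ℝ} (hθt : θt = 4 - 2 * (N : ℝ) - θ) {ψ : Euc N → ℝ}
    (h : MemH1wc θt Ω ψ) : MemH1wc θ (invPt '' Ω) (fun w => ψ (invPt w)) := by
  obtain ⟨hH1, hcs, hts⟩ := h
  have h0supp : (0 : Euc N) ∉ tsupport ψ := fun h0 => hΩ0 0 (hts h0) rfl
  have hsub : tsupport (fun w => ψ (invPt w)) ⊆ invPt '' tsupport ψ :=
    tsupport_comp_invPt_subset hcs h0supp
  refine ⟨memH1w_comp_invPt hΩ hΩ0 hθt hcs h0supp hH1, ?_, ?_⟩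
  · exact IsCompact.of_isClosed_subset (isCompact_invPt_image hcs h0supp)
      (isClosed_tsupport _) hsub
  · exact hsub.trans (image_mono hts)

lemma isStableE_transfer {Ω : Set (Euc N)} (hΩ : MeasurableSet Ω) (hΩ0 : ∀ y ∈ Ω, y ≠ 0)
    {θ l p θt lt : ℝ} (hθt : θt = 4 - 2 * (N : ℝ) - θ) (hlt : lt = -2 * (N : ℝ) - l)
    (v z : Euc N → ℝ) (hz : ∀ w, z w = v (invPt w))
    (hstab : IsStableE θ l p (invPt '' Ω) v) : IsStableE θt lt p Ω z := by
  intro ψ hψ hψinf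
  have h1 := hstab (fun w => ψ (invPt w)) (memH1wc_comp_invPt hΩ hΩ0 hθt hψ)
    (memLinftyLoc_comp_invPt hΩ0 hψinf)
  rwa [Qform_invPt hΩ hΩ0 hθt hlt v z ψ hz] at h1


/-- Proposition 1.8, the inversion `z(y) = v(x)`, `y = x/|x|²`,
preserves stability. A solution `v` of `-div(|x|^θ ∇v) = |x|^l |v|^{p-1} v` on
`B_R \ {0}` is stable iff `z` is a stable solution of
`-div(|y|^θ̃ ∇z) = |y|^l̃ |z|^{p-1} z` on `ℝ^N \ closure(B_{1/R})`, where
`θ̃ = 4 - 2N - θ`, `l̃ = -2N - l`. -/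
theorem stmt_3 {N : ℕ} (hN : 2 ≤ N) (θ l p R : ℝ) (hp : 1 < p) (hR : 0 < R)
    (v : Euc N → ℝ)
    (hv : IsSolutionE θ l p (ball (0 : Euc N) R \ {0}) v)
    (θt lt : ℝ) (hθt : θt = 4 - 2 * (N : ℝ) - θ) (hlt : lt = -2 * (N : ℝ) - l)
    (z : Euc N → ℝ) (hz : ∀ y : Euc N, z y = v (invPt y)) :
    IsStableE θ l p (ball (0 : Euc N) R \ {0}) v ↔
      IsStableE θt lt p ((closure (ball (0 : Euc N) (1 / R)))ᶜ) z := by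
  have hR' : (0:ℝ) < 1 / R := by positivity
  have hcb : closure (ball (0 : Euc N) (1/R)) = closedBall 0 (1/R) :=
    closure_ball 0 (ne_of_gt hR')
  have hmem2 : ∀ y : Euc N, y ∈ (closure (ball (0 : Euc N) (1 / R)))ᶜ ↔ 1 / R < ‖y‖ := by
    intro y
    rw [mem_compl_iff, hcb, mem_closedBall, dist_zero_right, not_le]
  have hmem1 : ∀ x : Euc N, x ∈ ball (0 : Euc N) R \ {0} ↔ ‖x‖ < R ∧ x ≠ 0 := by
    intro x; rw [mem_diff, mem_ball, dist_zero_right, mem_singleton_iff]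
  have h21 : ∀ y ∈ (closure (ball (0 : Euc N) (1 / R)))ᶜ, invPt y ∈ ball (0 : Euc N) R \ {0} := by
    intro y hy
    have h1 := (hmem2 y).1 hy
    have hy0 : y ≠ 0 := by
      intro h; rw [h, norm_zero] at h1; linarith
    refine (hmem1 _).2 ⟨?_, invPt_ne_zero hy0⟩
    rw [norm_invPt]
    have h2 := inv_strictAnti₀ hR' h1
    rwa [one_div, inv_inv] at h2
  have h12 : ∀ x ∈ ball (0 : Euc N) R \ {0}, invPt x ∈ (closure (ball (0 : Euc N) (1 / R)))ᶜ := by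
    intro x hx
    obtain ⟨h1, h2⟩ := (hmem1 x).1 hx
    have hx0 : (0:ℝ) < ‖x‖ := norm_pos_iff.2 h2
    refine (hmem2 _).2 ?_
    rw [norm_invPt, one_div]
    exact inv_strictAnti₀ hx0 h1
  have hI21 : invPt '' ((closure (ball (0 : Euc N) (1 / R)))ᶜ) = ball (0 : Euc N) R \ {0} :=
    image_invPt_eq h21 h12
  have hI12 : invPt '' (ball (0 : Euc N) R \ {0}) = (closure (ball (0 : Euc N) (1 / R)))ᶜ :=
    image_invPt_eq h12 h21
  have hΩ1m : MeasurableSet (ball (0 : Euc N) R \ {0}) :=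
    measurableSet_ball.diff (measurableSet_singleton 0)
  have hΩ2m : MeasurableSet ((closure (ball (0 : Euc N) (1 / R)))ᶜ) :=
    isClosed_closure.measurableSet.compl
  have hΩ10 : ∀ x ∈ ball (0 : Euc N) R \ {0}, x ≠ (0 : Euc N) :=
    fun x hx => ((hmem1 x).1 hx).2
  have hΩ20 : ∀ y ∈ (closure (ball (0 : Euc N) (1 / R)))ᶜ, y ≠ (0 : Euc N) := by
    intro y hy h0
    have h1 := (hmem2 y).1 hy
    rw [h0, norm_zero] at h1; linarith
  have hθt' : θt = 4 - 2 * (N : ℝ) - θ := by rw [hθt]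
  have hlt' : lt = -2 * (N : ℝ) - l := by rw [hlt]
  constructor
  · intro hstab
    exact isStableE_transfer hΩ2m hΩ20 hθt' hlt' v z hz (by rwa [hI21])
  · intro hstab
    have hθ'' : θ = 4 - 2 * (N : ℝ) - θt := by rw [hθt']; ring
    have hl'' : l = -2 * (N : ℝ) - lt := by rw [hlt']; ring
    have hv : ∀ w, v w = z (invPt w) := fun w => by rw [hz (invPt w), invPt_invPt]
    exact isStableE_transfer hΩ1m hΩ10 hθ'' hl'' z v hv (by rwa [hI12])

end
end

section
/- Let N ≥ 2, θ, l ∈ ℝ with N' = N + θ > 2 and τ = l − θ > −2, and suppose p ≥ p_c(N',τ) (so in particular N' > 10 + 4τ and p > (N'+2+2τ)/(N'−2)). For κ > 0 let v_κ be the unique positive solution of (r^{N−1+θ} v')' + r^{N−1+l} v^p = 0 for r > 0 with v(0) = κ and lim_{r→0+} r^{N−1+θ} v'(r) = 0. Then v_κ(r) < C_0 r^{−(2+τ)/(p−1)} for all r > 0 and all κ > 0, where C_0 = [((2+τ)/(p−1))(N'−2−(2+τ)/(p−1))]^{1/(p−1)}. -/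
open MeasureTheory Set Filter Metric

noncomputable section

/-- `v : [0,∞) → ℝ` is a positive radial solution of the initial value problem
`(r^{N-1+θ} v')' + r^{N-1+l} v^p = 0` for `r > 0`, `v(0) = κ`,
`lim_{r→0+} r^{N-1+θ} v'(r) = 0`. -/
def IsRadSol (N : ℕ) (θ l p κ : ℝ) (v : ℝ → ℝ) : Prop :=
  ContinuousOn v (Set.Ici 0) ∧ v 0 = κ ∧ (∀ r ∈ Set.Ioi (0 : ℝ), 0 < v r) ∧
  ∃ v' : ℝ → ℝ,
    (∀ r ∈ Set.Ioi (0 : ℝ), HasDerivAt v (v' r) r) ∧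
    (∀ r ∈ Set.Ioi (0 : ℝ),
      HasDerivAt (fun s : ℝ => s ^ ((N : ℝ) - 1 + θ) * v' s)
        (-(r ^ ((N : ℝ) - 1 + l) * v r ^ p)) r) ∧
    Filter.Tendsto (fun r : ℝ => r ^ ((N : ℝ) - 1 + θ) * v' r)
      (nhdsWithin 0 (Set.Ioi 0)) (nhds 0)


private theorem aux_alg (N' τ p : ℝ) (hN' : 2 < N') (hτ : -2 < τ) (hbig : 10 + 4*τ < N')
    (hP : Pplus N' τ ≤ p) :
    1 < p ∧ 2*(2+τ)/(N'-2) < p - 1 ∧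
      4*(p-1)*((2+τ)/(p-1)*(N'-2-(2+τ)/(p-1))) ≤ (N'-2-2*((2+τ)/(p-1)))^2 := by
  have hs0 : 0 ≤ Real.sqrt ((2 + τ) * (2 * N' + τ - 2)) := Real.sqrt_nonneg _
  set s : ℝ := Real.sqrt ((2 + τ) * (2 * N' + τ - 2)) with hs_def
  have harg : 0 ≤ (2 + τ) * (2 * N' + τ - 2) := by nlinarith
  have hs2 : s ^ 2 = (2 + τ) * (2 * N' + τ - 2) := by
    rw [hs_def, sq, Real.mul_self_sqrt harg]
  have hden : 0 < (N' - 2) * (N' - 4 * τ - 10) := by nlinarith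
  have hnum : (N' - 2) ^ 2 - 2 * (2+τ) * (N' + τ) + 2 * (2+τ) * s
      ≤ p * ((N' - 2) * (N' - 4 * τ - 10)) := by
    rw [Pplus, div_le_iff₀ hden] at hP; linarith
  have hp1 : 1 < p := by nlinarith [mul_nonneg (by linarith : (0:ℝ) ≤ 2+τ) hs0]
  have h2 : 2*(2+τ)/(N'-2) < p - 1 := by
    rw [div_lt_iff₀ (by linarith : (0:ℝ) < N' - 2)]
    nlinarith [mul_nonneg (by linarith : (0:ℝ) ≤ 2+τ) hs0]
  refine ⟨hp1, h2, ?_⟩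
  have hQ : 0 ≤ (N'-2)*(N'-10-4*τ)*(p-1)^2 - 4*(2+τ)*(N'-4-τ)*(p-1) + 4*(2+τ)^2 := by
    have ha : 0 < (N'-2)*(N'-10-4*τ) := by nlinarith
    have h1 : 0 ≤ 2*((N'-2)*(N'-10-4*τ))*(p-1) - 4*(2+τ)*(N'-4-τ) - 4*(2+τ)*s := by
      nlinarith
    have h2' : 0 ≤ 2*((N'-2)*(N'-10-4*τ))*(p-1) - 4*(2+τ)*(N'-4-τ) + 4*(2+τ)*s := by
      nlinarith [mul_nonneg (by linarith : (0:ℝ) ≤ 2+τ) hs0]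
    nlinarith [mul_nonneg h1 h2', hs2, sq_nonneg ((2+τ)*s), mul_pos ha ha]
  have hq0 : 0 < p - 1 := by linarith
  set α : ℝ := (2+τ)/(p-1) with hα_def
  have hα : α * (p-1) = 2 + τ := by rw [hα_def]; field_simp
  have hτ' : τ = α * (p-1) - 2 := by rw [hα]; ring
  have key : ((N'-2-2*α)^2 - 4*(p-1)*(α*(N'-2-α))) * (p-1)^2
      = (N'-2)*(N'-10-4*τ)*(p-1)^2 - 4*(2+τ)*(N'-4-τ)*(p-1) + 4*(2+τ)^2 := by
    rw [hτ']; ring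
  have h3 : 0 ≤ ((N'-2-2*α)^2 - 4*(p-1)*(α*(N'-2-α))) * (p-1)^2 := key ▸ hQ
  have h4 := (mul_nonneg_iff_of_pos_right (by positivity : (0:ℝ) < (p-1)^2)).mp h3
  linarith

set_option maxHeartbeats 1600000 in
/-- Lemma 3.1(ii): the radial solutions lie below the singular
solution. With `N' = N + θ > 2`, `τ = l - θ > -2` and `p ≥ p_c(N',τ)`, every
positive solution `v_κ` (`κ > 0`) of the radial initial value problem satisfies
`v_κ(r) < C₀ r^{-(2+τ)/(p-1)}` for all `r > 0`, where
`C₀ = [((2+τ)/(p-1))(N'-2-(2+τ)/(p-1))]^{1/(p-1)}`. -/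
theorem stmt_12 {N : ℕ} (hN : 2 ≤ N) (θ l p : ℝ)
    (N' τ : ℝ) (hN'def : N' = (N : ℝ) + θ) (hτdef : τ = l - θ)
    (hN' : 2 < N') (hτ : -2 < τ)
    (hpc : pc N' τ ≤ (p : EReal))
    (κ : ℝ) (hκ : 0 < κ)
    (v : ℝ → ℝ) (hv : IsRadSol N θ l p κ v) :
    ∀ r : ℝ, 0 < r →
      v r < ((2 + τ) / (p - 1) * (N' - 2 - (2 + τ) / (p - 1))) ^ (1 / (p - 1))
              * r ^ (-(2 + τ) / (p - 1)) := by
  classical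
  -- ## Step 0: unpack the critical exponent hypothesis
  have hbig : 10 + 4 * τ < N' := by
    by_contra hle
    rw [pc, if_pos (not_lt.1 hle)] at hpc
    exact (EReal.coe_ne_top p) (top_le_iff.1 hpc)
  have hP : Pplus N' τ ≤ p := by
    rw [pc, if_neg (not_le.2 hbig)] at hpc
    exact_mod_cast hpc
  -- ## Step A: algebraic consequences of p ≥ Pplus
  have hstepA := aux_alg N' τ p hN' hτ hbig hP
  obtain ⟨hp1, hsup, hdisc⟩ := hstepA
  have hq0 : (0:ℝ) < p - 1 := by linarith
  have hp0 : (0:ℝ) < p := by linarith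
  set α : ℝ := (2+τ)/(p-1) with hα_def
  have hα0 : 0 < α := div_pos (by linarith) hq0
  have hαq : α * (p-1) = 2 + τ := by rw [hα_def]; field_simp
  have hαp : α * p = α + 2 + τ := by nlinarith [hαq]
  set β : ℝ := N' - 2 - 2*α with hβ_def
  have hβ0 : 0 < β := by
    rw [div_lt_iff₀ (by linarith : (0:ℝ) < N'-2)] at hsup
    have hαlt : α * (p-1) * 2 < (N'-2) * (p-1) := by rw [hαq]; linarith
    have := lt_of_mul_lt_mul_right (by linarith : α * 2 * (p-1) < (N'-2) * (p-1)) hq0.le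
    rw [hβ_def]; linarith
  set A : ℝ := α * (N'-2-α) with hA_def
  have hA0 : 0 < A := by
    rw [hA_def]; exact mul_pos hα0 (by rw [hβ_def] at hβ0; linarith)
  have hdisc' : 4*(p-1)*A ≤ β^2 := hdisc
  set C0 : ℝ := A ^ (1/(p-1)) with hC0_def
  have hC0 : 0 < C0 := Real.rpow_pos_of_pos hA0 _
  have hC0A : C0 ^ (p-1) = A := by
    rw [hC0_def, ← Real.rpow_mul hA0.le, one_div, inv_mul_cancel₀ (by linarith : p - 1 ≠ 0), Real.rpow_one]
  -- eigenvalues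
  set D : ℝ := β^2 - 4*(p-1)*A with hD_def
  have hD0 : 0 ≤ D := by rw [hD_def]; linarith
  have hDβ : D < β^2 := by
    rw [hD_def]; nlinarith [mul_pos hq0 hA0]
  set sD : ℝ := Real.sqrt D with hsD_def
  have hsD0 : 0 ≤ sD := Real.sqrt_nonneg _
  have hsD2 : sD^2 = D := by rw [hsD_def, sq, Real.mul_self_sqrt hD0]
  have hsDβ : sD < β := by
    nlinarith [hsD2]
  set γ : ℝ := (β + sD)/2 with hγ_def
  set μ : ℝ := (sD - β)/2 with hμ_def
  have hγ0 : 0 < γ := by rw [hγ_def]; linarith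
  have hμ0 : μ < 0 := by rw [hμ_def]; linarith
  have hμγβ : μ = γ - β := by rw [hμ_def, hγ_def]; ring
  have hγμ : γ * μ = -((p-1)*A) := by
    have : γ * μ = (sD^2 - β^2)/4 := by rw [hγ_def, hμ_def]; ring
    rw [this, hsD2, hD_def]; ring
  -- ## Unpack the solution
  obtain ⟨hcont, hv0, hpos, v', hv'at, hODE, hlim⟩ := hv
  have he1 : (N:ℝ) - 1 + θ = N' - 1 := by rw [hN'def]; ring
  have he2 : (N:ℝ) - 1 + l = N' - 1 + τ := by rw [hN'def, hτdef]; ring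
  rw [he1, he2] at hODE
  rw [he1] at hlim
  -- second derivative of v
  have hv'' : ∀ r ∈ Set.Ioi (0:ℝ), HasDerivAt v'
      (-(N'-1) * v' r / r - r^τ * v r ^ p) r := by
    intro r hr
    have hr0 : (0:ℝ) < r := hr
    have hw := hODE r hr
    have hpow : HasDerivAt (fun s : ℝ => s ^ (1 - N')) ((1 - N') * r ^ (1 - N' - 1)) r :=
      Real.hasDerivAt_rpow_const (Or.inl hr0.ne')
    have hprod := hpow.mul hw
    have heq : (fun s : ℝ => s ^ (1 - N') * (s ^ (N' - 1) * v' s)) =ᶠ[nhds r] v' := by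
      filter_upwards [eventually_gt_nhds hr0] with s hs
      rw [← mul_assoc, ← Real.rpow_add hs, show (1 - N') + (N' - 1) = (0:ℝ) by ring,
        Real.rpow_zero, one_mul]
    have hd := hprod.congr_of_eventuallyEq heq.symm
    refine hd.congr_deriv ?_
    have h1 : r ^ (1 - N' - 1) * r ^ (N' - 1) = r⁻¹ := by
      rw [← Real.rpow_add hr0, show (1 - N' - 1) + (N' - 1) = (-1:ℝ) by ring,
        Real.rpow_neg_one]
    have h2 : r ^ (1 - N') * r ^ (N' - 1 + τ) = r ^ τ := by
      rw [← Real.rpow_add hr0, show (1 - N') + (N' - 1 + τ) = τ by ring]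
    rw [div_eq_mul_inv, ← h1, ← h2]
    ring
  -- ## Emden-Fowler transformation
  set x : ℝ → ℝ := fun t => Real.exp (α*t) * v (Real.exp t) with hx_def
  set x1 : ℝ → ℝ := fun t => α * x t + Real.exp ((α+1)*t) * v' (Real.exp t) with hx1_def
  have hxpos : ∀ t, 0 < x t := fun t =>
    mul_pos (Real.exp_pos _) (hpos _ (Real.exp_pos t))
  have hx1at : ∀ t, HasDerivAt x (x1 t) t := by
    intro t
    have h1 : HasDerivAt (fun u : ℝ => v (Real.exp u)) (v' (Real.exp t) * Real.exp t) t :=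
      (hv'at _ (Set.mem_Ioi.mpr (Real.exp_pos t))).comp t (Real.hasDerivAt_exp t)
    have h2 : HasDerivAt (fun u : ℝ => Real.exp (α * u)) (Real.exp (α * t) * (α * 1)) t :=
      ((hasDerivAt_id t).const_mul α).exp
    have h3 := h2.mul h1
    refine h3.congr_deriv ?_
    simp only [hx1_def, hx_def]
    rw [show (α + 1) * t = α * t + t by ring, Real.exp_add]
    ring
  have hx2at : ∀ t, HasDerivAt x1 (-β * x1 t + A * x t - x t ^ p) t := by
    intro t
    have hexp_t : (0:ℝ) < Real.exp t := Real.exp_pos t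
    have h1 : HasDerivAt (fun u : ℝ => v' (Real.exp u))
        ((-(N'-1) * v' (Real.exp t) / Real.exp t
          - (Real.exp t)^τ * v (Real.exp t) ^ p) * Real.exp t) t :=
      (hv'' _ (Set.mem_Ioi.mpr hexp_t)).comp t (Real.hasDerivAt_exp t)
    have h2 : HasDerivAt (fun u : ℝ => Real.exp ((α+1) * u))
        (Real.exp ((α+1) * t) * ((α+1) * 1)) t :=
      ((hasDerivAt_id t).const_mul (α+1)).exp
    have h3 := ((hx1at t).const_mul α).add (h2.mul h1)
    refine h3.congr_deriv ?_
    have hEV : Real.exp ((α+1)*t) * v' (Real.exp t) = x1 t - α * x t := by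
      simp only [hx1_def]; ring
    have hxp : Real.exp ((α+1)*t) * ((Real.exp t)^τ * v (Real.exp t) ^ p * Real.exp t)
        = x t ^ p := by
      have hτt : (Real.exp t)^τ = Real.exp (t*τ) := (Real.exp_mul t τ).symm
      have hxpv : x t ^ p = Real.exp (α*t*p) * v (Real.exp t) ^ p := by
        simp only [hx_def]
        rw [Real.mul_rpow (Real.exp_pos _).le (hpos _ hexp_t).le, ← Real.exp_mul]
      rw [hτt, show Real.exp ((α+1)*t) * (Real.exp (t*τ) * v (Real.exp t) ^ p * Real.exp t)
          = Real.exp ((α+1)*t) * Real.exp (t*τ) * Real.exp t * v (Real.exp t) ^ p by ring,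
        ← Real.exp_add, ← Real.exp_add, show (α+1)*t + t*τ + t = α*t*p by linear_combination (-t) * hαp,
        hxpv]
    have e0 : (-(N'-1) * v' (Real.exp t) / Real.exp t
          - (Real.exp t)^τ * v (Real.exp t) ^ p) * Real.exp t
        = -(N'-1) * v' (Real.exp t) - (Real.exp t)^τ * v (Real.exp t) ^ p * Real.exp t := by
      field_simp
    rw [e0, mul_sub, hxp, hβ_def, hA_def]
    have : Real.exp ((α+1)*t) * (-(N'-1) * v' (Real.exp t))
        = -(N'-1) * (x1 t - α * x t) := by rw [← hEV]; ring
    rw [this]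
    have : Real.exp ((α+1)*t) * ((α+1)*1) * v' (Real.exp t)
        = (α+1) * (x1 t - α * x t) := by rw [← hEV]; ring
    rw [this]
    ring
  have hxcont : Continuous x := by
    have : Differentiable ℝ x := fun t => (hx1at t).differentiableAt
    exact this.continuous
  -- ## bounds near the origin
  obtain ⟨r1, hr1, hvb⟩ : ∃ r1 : ℝ, 0 < r1 ∧ ∀ r ∈ Set.Icc (0:ℝ) r1, v r ≤ κ + 1 := by
    have hc0 : ContinuousWithinAt v (Set.Ici 0) 0 := hcont 0 Set.self_mem_Ici
    have hmem0 : Set.Iio (κ+1) ∈ nhds (v 0) := by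
      rw [hv0]; exact Iio_mem_nhds (by linarith)
    have hmem : v ⁻¹' Set.Iio (κ+1) ∈ nhdsWithin 0 (Set.Ici 0) := hc0 hmem0
    rw [Metric.mem_nhdsWithin_iff] at hmem
    obtain ⟨ε, hε, hsub⟩ := hmem
    refine ⟨ε/2, by linarith, ?_⟩
    intro r hr
    have hrb : r ∈ Metric.ball (0:ℝ) ε ∩ Set.Ici 0 := by
      constructor
      · simp only [Metric.mem_ball, Real.dist_eq, sub_zero, abs_of_nonneg hr.1]
        linarith [hr.2]
      · exact hr.1
    exact (Set.mem_Iio.1 (hsub hrb)).le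
  have hN'τ : 0 < N' + τ := by linarith
  set M : ℝ := (κ+1)^p / (N'+τ) with hM_def
  have hM0 : 0 ≤ M := by
    apply div_nonneg _ hN'τ.le
    positivity
  have hv'b : ∀ r ∈ Set.Ioc (0:ℝ) r1, |v' r| ≤ M * r^(1+τ) := by
    have hB0 : (0:ℝ) < (κ+1)^p := Real.rpow_pos_of_pos (by linarith) p
    have hvpb : ∀ s ∈ Set.Ioc (0:ℝ) r1, v s ^ p ≤ (κ+1)^p := by
      intro s hs
      exact Real.rpow_le_rpow (hpos s hs.1).le (hvb s ⟨hs.1.le, hs.2⟩) hp0.le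
    set w : ℝ → ℝ := fun s => s ^ (N'-1) * v' s with hw_def
    set G : ℝ → ℝ := fun s => (κ+1)^p/(N'+τ) * s^(N'+τ) with hG_def
    have hGat : ∀ s : ℝ, 0 < s → HasDerivAt G ((κ+1)^p * s^(N'+τ-1)) s := by
      intro s hs
      have h := (Real.hasDerivAt_rpow_const (p := N'+τ) (Or.inl (ne_of_gt hs))).const_mul
        ((κ+1)^p/(N'+τ))
      refine h.congr_deriv ?_
      field_simp
    have hGlim : Filter.Tendsto G (nhdsWithin 0 (Set.Ioi 0)) (nhds 0) := by
      have hc : ContinuousAt (fun s : ℝ => s ^ (N'+τ)) 0 :=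
        Real.continuousAt_rpow_const 0 (N'+τ) (Or.inr hN'τ.le)
      have h0 : Filter.Tendsto (fun s : ℝ => s ^ (N'+τ)) (nhds 0) (nhds 0) := by
        have := hc.tendsto
        rwa [Real.zero_rpow (ne_of_gt hN'τ)] at this
      have h5 : Filter.Tendsto (fun s : ℝ => (κ+1)^p/(N'+τ) * s^(N'+τ))
          (nhdsWithin 0 (Set.Ioi 0)) (nhds ((κ+1)^p/(N'+τ) * 0)) :=
        (h0.const_mul _).mono_left nhdsWithin_le_nhds
      simpa using h5
    have hkey : ∀ c : ℝ, c = 1 ∨ c = -1 → ∀ r ∈ Set.Ioc (0:ℝ) r1, 0 ≤ G r + c * w r := by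
      intro c hc r hr
      have hr0 : 0 < r := hr.1
      have hmono : ∀ ε, 0 < ε → ε ≤ r → G ε + c * w ε ≤ G r + c * w r := by
        intro ε hε hεr
        have hmo : MonotoneOn (fun s => G s + c * w s) (Set.Icc ε r) := by
          apply monotoneOn_of_deriv_nonneg (convex_Icc ε r)
          · apply ContinuousOn.add
            · intro s hs
              exact ((hGat s (lt_of_lt_of_le hε hs.1)).continuousAt).continuousWithinAt
            · intro s hs
              exact (((hODE s (lt_of_lt_of_le hε hs.1)).const_mul c).continuousAt).continuousWithinAt
          · intro s hs
            rw [interior_Icc] at hs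
            have hs0 : 0 < s := lt_trans hε hs.1
            exact ((hGat s hs0).add ((hODE s hs0).const_mul c)).differentiableAt.differentiableWithinAt
          · intro s hs
            rw [interior_Icc] at hs
            have hs0 : 0 < s := lt_trans hε hs.1
            have hder : HasDerivAt (fun s => G s + c * w s) _ s := (hGat s hs0).add ((hODE s hs0).const_mul c)
            rw [hder.deriv]
            have hb1 : s^(N'-1+τ) * v s ^ p ≤ (κ+1)^p * s^(N'+τ-1) := by
              have h1 := hvpb s ⟨hs0, le_trans hs.2.le hr.2⟩
              have h2 : (0:ℝ) < s^(N'-1+τ) := Real.rpow_pos_of_pos hs0 _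
              calc s^(N'-1+τ) * v s ^ p ≤ s^(N'-1+τ) * (κ+1)^p :=
                    mul_le_mul_of_nonneg_left h1 h2.le
                _ = (κ+1)^p * s^(N'+τ-1) := by
                    rw [show N'-1+τ = N'+τ-1 by ring]; ring
            have hb2 : 0 ≤ s^(N'-1+τ) * v s ^ p := by
              have h2 : (0:ℝ) < s^(N'-1+τ) := Real.rpow_pos_of_pos hs0 _
              have h3 : (0:ℝ) < v s ^ p := Real.rpow_pos_of_pos (hpos s hs0) p
              positivity
            rcases hc with h | h <;> rw [h] <;> linarith
        exact hmo ⟨le_refl ε, hεr⟩ ⟨hεr, le_refl r⟩ hεr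
      have hlim2 : Filter.Tendsto (fun ε => G ε + c * w ε) (nhdsWithin 0 (Set.Ioi 0)) (nhds 0) := by
        have := hGlim.add (hlim.const_mul c)
        simpa using this
      refine le_of_tendsto hlim2 ?_
      filter_upwards [Ioo_mem_nhdsGT_of_mem (Set.left_mem_Ico.2 hr0)] with ε hε
      exact hmono ε hε.1 hε.2.le
    intro r hr
    have hr0 : 0 < r := hr.1
    have h1 := hkey 1 (Or.inl rfl) r hr
    have h2 := hkey (-1) (Or.inr rfl) r hr
    have habs : |w r| ≤ G r := by
      rw [abs_le]
      constructor <;> linarith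
    have hv'eq : v' r = r ^ (1-N') * w r := by
      rw [hw_def]
      simp only
      rw [← mul_assoc, ← Real.rpow_add hr0, show (1-N') + (N'-1) = (0:ℝ) by ring,
        Real.rpow_zero, one_mul]
    rw [hv'eq, abs_mul, abs_of_nonneg (Real.rpow_nonneg hr0.le _)]
    calc r^(1-N') * |w r| ≤ r^(1-N') * G r :=
          mul_le_mul_of_nonneg_left habs (Real.rpow_nonneg hr0.le _)
      _ = M * r^(1+τ) := by
          rw [hG_def, hM_def]
          simp only
          rw [show r^(1-N') * ((κ+1)^p/(N'+τ) * r^(N'+τ))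
              = (κ+1)^p/(N'+τ) * (r^(1-N') * r^(N'+τ)) by ring,
            ← Real.rpow_add hr0, show (1-N') + (N'+τ) = 1+τ by ring]
  -- ## limits at -∞
  have hexp0 : ∀ c : ℝ, 0 < c → Filter.Tendsto (fun t => Real.exp (c*t)) Filter.atBot (nhds 0) := by
    intro c hc
    exact Real.tendsto_exp_atBot.comp (tendsto_id.const_mul_atBot hc)
  have hx0 : Filter.Tendsto x Filter.atBot (nhds 0) := by
    have hev : ∀ᶠ t in Filter.atBot, x t ≤ (κ+1) * Real.exp (α*t) := by
      filter_upwards [Filter.eventually_le_atBot (Real.log r1)] with t ht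
      have het : Real.exp t ≤ r1 := by
        calc Real.exp t ≤ Real.exp (Real.log r1) := Real.exp_le_exp.2 ht
          _ = r1 := Real.exp_log hr1
      have hb := hvb (Real.exp t) ⟨(Real.exp_pos t).le, het⟩
      simp only [hx_def]
      calc Real.exp (α*t) * v (Real.exp t) ≤ Real.exp (α*t) * (κ+1) :=
            mul_le_mul_of_nonneg_left hb (Real.exp_pos _).le
        _ = (κ+1) * Real.exp (α*t) := mul_comm _ _
    have h2 : Filter.Tendsto (fun t => (κ+1)*Real.exp (α*t)) Filter.atBot (nhds 0) := by
      simpa using (hexp0 α hα0).const_mul (κ+1)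
    exact squeeze_zero' (Filter.Eventually.of_forall (fun t => (hxpos t).le)) hev h2
  set φ : ℝ → ℝ := fun t => x1 t + γ * (x t - C0) with hφ_def
  set Ψ : ℝ → ℝ := fun t => Real.exp (-μ*t) * φ t with hΨ_def
  have hΨlim : Filter.Tendsto Ψ Filter.atBot (nhds 0) := by
    have hΨeq : Ψ = fun t => (α+γ) * (Real.exp ((α-μ)*t) * v (Real.exp t))
        + Real.exp ((α+1-μ)*t) * v' (Real.exp t) - γ*C0*Real.exp (-μ*t) := by
      funext t
      simp only [hΨ_def, hφ_def, hx1_def, hx_def]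
      rw [show (α-μ)*t = -μ*t + α*t by ring, show (α+1-μ)*t = -μ*t + (α+1)*t by ring,
        Real.exp_add, Real.exp_add]
      ring
    rw [hΨeq]
    have l1 : Filter.Tendsto (fun t => (α+γ) * (Real.exp ((α-μ)*t) * v (Real.exp t)))
        Filter.atBot (nhds 0) := by
      have l1a : Filter.Tendsto (fun t => Real.exp ((α-μ)*t) * v (Real.exp t))
          Filter.atBot (nhds 0) := by
        have hev : ∀ᶠ t in Filter.atBot,
            Real.exp ((α-μ)*t) * v (Real.exp t) ≤ (κ+1) * Real.exp ((α-μ)*t) := by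
          filter_upwards [Filter.eventually_le_atBot (Real.log r1)] with t ht
          have het : Real.exp t ≤ r1 := by
            calc Real.exp t ≤ Real.exp (Real.log r1) := Real.exp_le_exp.2 ht
              _ = r1 := Real.exp_log hr1
          have hb := hvb (Real.exp t) ⟨(Real.exp_pos t).le, het⟩
          calc Real.exp ((α-μ)*t) * v (Real.exp t) ≤ Real.exp ((α-μ)*t) * (κ+1) :=
                mul_le_mul_of_nonneg_left hb (Real.exp_pos _).le
            _ = (κ+1) * Real.exp ((α-μ)*t) := mul_comm _ _
        have h2 : Filter.Tendsto (fun t => (κ+1)*Real.exp ((α-μ)*t)) Filter.atBot (nhds 0) := by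
          simpa using (hexp0 (α-μ) (by linarith)).const_mul (κ+1)
        refine squeeze_zero' ?_ hev h2
        exact Filter.Eventually.of_forall fun t =>
          mul_nonneg (Real.exp_pos _).le (hpos _ (Real.exp_pos t)).le
      simpa using l1a.const_mul (α+γ)
    have l2 : Filter.Tendsto (fun t => Real.exp ((α+1-μ)*t) * v' (Real.exp t))
        Filter.atBot (nhds 0) := by
      have hev : ∀ᶠ t in Filter.atBot,
          ‖Real.exp ((α+1-μ)*t) * v' (Real.exp t)‖ ≤ M * Real.exp ((α+2+τ-μ)*t) := by
        filter_upwards [Filter.eventually_le_atBot (Real.log r1)] with t ht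
        have het : Real.exp t ≤ r1 := by
          calc Real.exp t ≤ Real.exp (Real.log r1) := Real.exp_le_exp.2 ht
            _ = r1 := Real.exp_log hr1
        have hb := hv'b (Real.exp t) ⟨Real.exp_pos t, het⟩
        rw [Real.norm_eq_abs, abs_mul, abs_of_nonneg (Real.exp_pos ((α+1-μ)*t)).le]
        calc Real.exp ((α+1-μ)*t) * |v' (Real.exp t)|
            ≤ Real.exp ((α+1-μ)*t) * (M * (Real.exp t)^(1+τ)) :=
              mul_le_mul_of_nonneg_left hb (Real.exp_pos _).le
          _ = M * Real.exp ((α+2+τ-μ)*t) := by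
              rw [show (Real.exp t)^(1+τ) = Real.exp (t*(1+τ)) from (Real.exp_mul t (1+τ)).symm]
              rw [show Real.exp ((α+1-μ)*t) * (M * Real.exp (t*(1+τ)))
                  = M * (Real.exp ((α+1-μ)*t) * Real.exp (t*(1+τ))) by ring,
                ← Real.exp_add, show (α+1-μ)*t + t*(1+τ) = (α+2+τ-μ)*t by ring]
      have h2 : Filter.Tendsto (fun t => M * Real.exp ((α+2+τ-μ)*t)) Filter.atBot (nhds 0) := by
        simpa using (hexp0 (α+2+τ-μ) (by linarith)).const_mul M
      exact squeeze_zero_norm' hev h2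
    have l3 : Filter.Tendsto (fun t => γ*C0*Real.exp (-μ*t)) Filter.atBot (nhds 0) := by
      simpa using (hexp0 (-μ) (by linarith)).const_mul (γ*C0)
    have := (l1.add l2).sub l3
    simpa using this
  have hΨat : ∀ t, HasDerivAt Ψ
      (Real.exp (-μ*t) * (p*A*x t - x t^p - (p-1)*A*C0)) t := by
    intro t
    have hφat : HasDerivAt φ ((-β * x1 t + A * x t - x t ^ p) + γ * (x1 t)) t :=
      (hx2at t).add (((hx1at t).sub_const C0).const_mul γ)
    have hexpat : HasDerivAt (fun u : ℝ => Real.exp (-μ*u)) (Real.exp (-μ*t) * (-μ*1)) t :=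
      ((hasDerivAt_id t).const_mul (-μ)).exp
    have h3 := hexpat.mul hφat
    refine h3.congr_deriv ?_
    have hid : p*A*x t - x t^p - (p-1)*A*C0
        = (-μ*1) * (x1 t + γ*(x t - C0)) + ((-β * x1 t + A * x t - x t ^ p) + γ * x1 t) := by
      linear_combination (x t - C0) * hγμ + x1 t * hμγβ
    simp only [hφ_def]
    rw [hid]
    ring
  have hΨcont : Continuous Ψ := by
    have : Differentiable ℝ Ψ := fun t => (hΨat t).differentiableAt
    exact this.continuous
  have hstrict : ∀ y : ℝ, 0 < y → y < C0 → p*A*y - y^p - (p-1)*A*C0 < 0 := by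
    intro y hy0 hyC
    have hyC' : y/C0 < 1 := (div_lt_one hC0).2 hyC
    have hs1 : (-1:ℝ) ≤ y/C0 - 1 := by
      have : 0 < y/C0 := div_pos hy0 hC0
      linarith
    have hs2 : y/C0 - 1 ≠ 0 := by
      intro h
      rw [sub_eq_zero] at h
      linarith
    have hB := one_add_mul_self_lt_rpow_one_add hs1 hs2 hp1
    rw [show (1:ℝ) + (y/C0 - 1) = y/C0 by ring] at hB
    rw [Real.div_rpow hy0.le hC0.le] at hB
    have hC0ppos : (0:ℝ) < C0^p := Real.rpow_pos_of_pos hC0 p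
    have hmul := mul_lt_mul_of_pos_right hB hC0ppos
    rw [div_mul_cancel₀ _ (ne_of_gt hC0ppos)] at hmul
    have hC0p : C0^p = A * C0 := by
      rw [show p = (p-1) + 1 by ring, Real.rpow_add hC0, Real.rpow_one, hC0A]
    rw [hC0p] at hmul
    have hexp : (1 + p*(y/C0 - 1)) * (A*C0) = p*A*y - (p-1)*A*C0 := by
      field_simp
      ring
    rw [hexp] at hmul
    linarith
  -- ## main argument
  intro r0 hr0
  by_contra hcontra
  push_neg at hcontra
  rw [show -(2+τ)/(p-1) = -α by rw [hα_def]; ring] at hcontra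
  have hxt0 : C0 ≤ x (Real.log r0) := by
    have hrα : Real.exp (α * Real.log r0) = r0 ^ α := by
      rw [Real.rpow_def_of_pos hr0, mul_comm]
    have : x (Real.log r0) = r0 ^ α * v r0 := by
      rw [hx_def]; simp only [Real.exp_log hr0, hrα]
    rw [this]
    calc C0 = r0 ^ α * (C0 * r0 ^ (-α)) := by
          rw [← mul_assoc, mul_comm (r0^α) C0, mul_assoc, ← Real.rpow_add hr0]
          simp
      _ ≤ r0 ^ α * v r0 := by
          apply mul_le_mul_of_nonneg_left hcontra (Real.rpow_nonneg hr0.le α)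
  set t0 : ℝ := Real.log r0 with ht0_def
  set S : Set ℝ := {t | C0 ≤ x t} ∩ Set.Iic t0 with hS_def
  have hSne : S.Nonempty := ⟨t0, hxt0, le_refl t0⟩
  obtain ⟨tlo, htlo⟩ : ∃ tlo, ∀ t ≤ tlo, x t < C0 := by
    have hev : ∀ᶠ t in Filter.atBot, x t < C0 := hx0.eventually (eventually_lt_nhds hC0)
    rw [Filter.eventually_atBot] at hev
    exact hev
  have hSbdd : BddBelow S := by
    refine ⟨tlo, fun t ht => ?_⟩
    by_contra hlt
    push_neg at hlt
    exact absurd ht.1 (not_le.2 (htlo t hlt.le))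
  have hSclosed : IsClosed S :=
    (isClosed_le continuous_const hxcont).inter isClosed_Iic
  set T0 : ℝ := sInf S with hT0_def
  have hT0S : T0 ∈ S := hSclosed.csInf_mem hSne hSbdd
  have hlt : ∀ t, t < T0 → x t < C0 := by
    intro t ht
    by_contra hge
    push_neg at hge
    have : t ∈ S := ⟨hge, le_trans ht.le hT0S.2⟩
    exact absurd (csInf_le hSbdd this) (not_le.2 ht)
  have hxT0 : x T0 = C0 := by
    refine le_antisymm ?_ hT0S.1
    have h1 : Filter.Tendsto x (nhdsWithin T0 (Set.Iio T0)) (nhds (x T0)) :=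
      (hxcont.continuousAt).continuousWithinAt.tendsto
    refine le_of_tendsto h1 ?_
    filter_upwards [self_mem_nhdsWithin] with t ht
    exact (hlt t ht).le
  have hx1T0 : 0 ≤ x1 T0 := by
    have hslope : Filter.Tendsto (slope x T0) (nhdsWithin T0 {T0}ᶜ) (nhds (x1 T0)) :=
      hasDerivAt_iff_tendsto_slope.1 (hx1at T0)
    have hslope' : Filter.Tendsto (slope x T0) (nhdsWithin T0 (Set.Iio T0)) (nhds (x1 T0)) :=
      hslope.mono_left (nhdsWithin_mono _ (fun t ht => ne_of_lt ht))
    refine ge_of_tendsto hslope' ?_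
    filter_upwards [self_mem_nhdsWithin] with t ht
    rw [slope_def_field]
    apply div_nonneg_of_nonpos
    · rw [hxT0]
      exact sub_nonpos.2 (hlt t ht).le
    · exact sub_nonpos.2 (Set.mem_Iio.1 ht).le
  have hΨanti : StrictAntiOn Ψ (Set.Iic T0) := by
    apply strictAntiOn_of_deriv_neg (convex_Iic T0) hΨcont.continuousOn
    intro t ht
    rw [interior_Iic] at ht
    rw [(hΨat t).deriv]
    have hx_in : x t < C0 := hlt t ht
    have := hstrict (x t) (hxpos t) hx_in
    have hex : 0 < Real.exp (-μ*t) := Real.exp_pos _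
    exact mul_neg_of_pos_of_neg hex this
  have hΨT0 : 0 ≤ Ψ T0 := by
    rw [hΨ_def]
    simp only
    rw [hφ_def]
    simp only
    rw [hxT0]
    simp only [sub_self, mul_zero, add_zero]
    exact mul_nonneg (Real.exp_pos _).le hx1T0
  have hΨt1 : Ψ (T0 - 1) ≤ 0 := by
    refine ge_of_tendsto hΨlim ?_
    filter_upwards [Filter.eventually_le_atBot (T0 - 2)] with s hs
    exact (hΨanti (Set.mem_Iic.mpr (by linarith)) (Set.mem_Iic.mpr (by linarith))
      (by linarith)).le
  have : Ψ T0 < Ψ (T0 - 1) :=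
    hΨanti (Set.mem_Iic.mpr (by linarith)) (Set.mem_Iic.mpr (le_refl T0)) (by linarith)
  linarith

end
end
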